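/- Let m ≥ 1 be an integer and let L > 0 and A be real numbers with 0 ≤ A ≤ 4π and 4πA − A² ≤ L². Then min over (k, l) ∈ ℤ² of [ k²m² + (4π²/L²)·((2l + 1) − kmA/(2π))² ] = 4π²/L²; that is, for all integers k and l one has k²m² + (4π²/L²)·((2l + 1) − kmA/(2π))² ≥ 4π²/L², with equality attained at (k, l) = (0, 0). (These are the Dirac eigenvalues on the Hopf torus in the Lens space L(m,1); the constraints on A and L hold for the length L and enclosed area A of a simple closed curve on the unit sphere.) -/

import Mathlib

open Real

/-- The Dirac eigenvalues `λ²_m(k,l) = k²m² + (4π²/L²)((2l+1) - kmA/(2π))²` on the Hopf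
torus in the Lens space `L(m,1)` are bounded below by `4π²/L²`, provided `m ≥ 1`,
`0 ≤ A ≤ 4π` and `4πA - A² ≤ L²`, and this minimum is attained at `(k,l) = (0,0)`. -/
theorem dirac_eigenvalues_lens_space_hopf_torus_min
    (m : ℤ) (hm : 1 ≤ m)
    (L A : ℝ) (hL : 0 < L) (hA0 : 0 ≤ A) (hA4π : A ≤ 4 * π)
    (hiso : 4 * π * A - A^2 ≤ L^2) :
    (∀ k l : ℤ,
      (k:ℝ)^2 * (m:ℝ)^2
        + (4 * π^2 / L^2) * ((2 * (l:ℝ) + 1) - (k:ℝ) * (m:ℝ) * A / (2 * π))^2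
        ≥ 4 * π^2 / L^2) ∧
    ((0:ℝ)^2 * (m:ℝ)^2
        + (4 * π^2 / L^2) * ((2 * (0:ℝ) + 1) - (0:ℝ) * (m:ℝ) * A / (2 * π))^2
        = 4 * π^2 / L^2) := by
  have hπ : (0:ℝ) < π := Real.pi_pos
  have hL2 : (0:ℝ) < L^2 := by positivity
  constructor
  · intro k l
    -- integer facts
    have hzn : (2*l+1 : ℤ) ≠ 0 := by omega
    have hzx : (2*l+1 - 2*(k*m) : ℤ) ≠ 0 := by omega
    have hn2 : (1:ℤ) ≤ (2*l+1)^2 := by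
      rcases lt_or_gt_of_ne hzn with h | h <;> nlinarith
    have hx2 : (1:ℤ) ≤ (2*l+1 - 2*(k*m))^2 := by
      rcases lt_or_gt_of_ne hzx with h | h <;> nlinarith
    have hn2' : (1:ℝ) ≤ (2*(l:ℝ)+1)^2 := by exact_mod_cast hn2
    have hx2' : (1:ℝ) ≤ (2*(l:ℝ)+1 - 2*((k:ℝ)*(m:ℝ)))^2 := by exact_mod_cast hx2
    set X : ℝ := (k:ℝ)*(m:ℝ) with hX
    set N : ℝ := 2*(l:ℝ)+1 with hN
    have key : 4*π^2 ≤ L^2 * X^2 + (2*π*N - X*A)^2 := by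
      nlinarith [mul_nonneg (sub_nonneg.2 hA4π) (sub_nonneg.2 hn2'),
        mul_nonneg hA0 (sub_nonneg.2 hx2'),
        mul_nonneg (by nlinarith : (0:ℝ) ≤ A^2 + L^2 - 4*π*A) (sq_nonneg X)]
    have e2 : (k:ℝ)^2 * (m:ℝ)^2
        + (4 * π^2 / L^2) * ((2 * (l:ℝ) + 1) - (k:ℝ) * (m:ℝ) * A / (2 * π))^2
        = (L^2 * X^2 + (2*π*N - X*A)^2) / L^2 := by
      field_simp
      ring
    rw [e2, ge_iff_le, div_le_div_iff₀ hL2 hL2]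
    nlinarith [key]
  · field_simp
    ring
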